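/- Let P = {p_i : i ≥ 1} and Q = {q_k : k ≥ 1} be probability distributions on a countably infinite alphabet with all probabilities positive and Q non-increasing, such that p_k = c_1 k^{−r} e^{−λ k} and q_k = c_2 e^{−λ k} for all k ≥ k_0, where k_0 ≥ 1 is an integer and λ > 0, r > 0, c_1 > 0, c_2 > 0 are constants. Then Q dominates P; moreover, for all sufficiently large k each interval (q_{k+1}, q_k] contains at most one term p_j. -/
import Mathlib


open Filter Topology

/-- A non-increasing distribution `Q` dominates `P` if there is a finite positive integer
`M` such that `#{i : q_{k+1} < p_i ≤ q_k} ≤ M` for every `k`. -/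
def Dominates (q p : ℕ → ℝ) : Prop :=
  ∃ M : ℕ, 0 < M ∧ ∀ k : ℕ, {i : ℕ | q (k + 1) < p i ∧ p i ≤ q k}.encard ≤ (M : ℕ∞)

/-- If `p_k = c₁ k^(−r) e^(−λk)` and `q_k = c₂ e^(−λk)` for all `k ≥ k₀`, with `λ, r > 0`,
then `Q` dominates `P`; moreover, for all sufficiently large `k`, each interval
`(q_{k+1}, q_k]` contains at most one term `p_j`. -/
theorem stmt15 (p q : ℕ → ℝ) (hp : ∀ i, 0 < p i) (hq : ∀ k, 0 < q k)
    (hpsum : ∑' i, p i = 1) (hqsum : ∑' k, q k = 1) (hqmono : Antitone q)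
    (c₁ c₂ lam r : ℝ) (hc₁ : 0 < c₁) (hc₂ : 0 < c₂) (hlam : 0 < lam) (hr : 0 < r)
    (k₀ : ℕ) (hk₀ : 1 ≤ k₀)
    (hpform : ∀ k : ℕ, k₀ ≤ k → p k = c₁ * (k : ℝ) ^ (-r) * Real.exp (-lam * (k : ℝ)))
    (hqform : ∀ k : ℕ, k₀ ≤ k → q k = c₂ * Real.exp (-lam * (k : ℝ))) :
    Dominates q p ∧
      ∀ᶠ k : ℕ in atTop, {j : ℕ | q (k + 1) < p j ∧ p j ≤ q k}.encard ≤ 1 := by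
  have hsp : Summable p := by
    by_contra h
    rw [tsum_eq_zero_of_not_summable h] at hpsum; norm_num at hpsum
  have hp0 : Tendsto p atTop (𝓝 0) := hsp.tendsto_atTop_zero
  have hsq : Summable q := by
    by_contra h
    rw [tsum_eq_zero_of_not_summable h] at hqsum; norm_num at hqsum
  have hq0 : Tendsto q atTop (𝓝 0) := hsq.tendsto_atTop_zero
  set N := max k₀ 1 with hN
  -- Key: at most one index `≥ N` in the interval, for `k ≥ k₀`.
  have key : ∀ k, k₀ ≤ k → ∀ i j : ℕ, N ≤ i → N ≤ j →
      q (k+1) < p i → p i ≤ q k → q (k+1) < p j → p j ≤ q k → i = j := by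
    intro k hk i j hi hj hqi hiq hqj hjq
    by_contra hne
    wlog hij : i < j generalizing i j
    · exact this j i hj hi hqj hjq hqi hiq (Ne.symm hne) (by omega)
    have h1i : (1:ℝ) ≤ (i:ℝ) := by exact_mod_cast le_trans (le_max_right _ _) hi
    have hipos : (0:ℝ) < (i:ℝ) := by linarith
    have hjpos : (0:ℝ) < (j:ℝ) := by exact_mod_cast lt_of_lt_of_le Nat.one_pos (le_trans (le_max_right _ _) hj)
    have hji : (i:ℝ) + 1 ≤ (j:ℝ) := by exact_mod_cast hij
    have hpowle : (j:ℝ) ^ (-r) ≤ (i:ℝ) ^ (-r) :=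
      Real.rpow_le_rpow_of_nonpos hipos (by linarith) (by linarith)
    have hexple : Real.exp (-lam * (j:ℝ)) ≤ Real.exp (-lam * (i:ℝ)) * Real.exp (-lam) := by
      rw [← Real.exp_add]
      apply Real.exp_le_exp.mpr
      nlinarith
    have hpj : p j ≤ p i * Real.exp (-lam) := by
      rw [hpform j (le_trans (le_max_left _ _) hj), hpform i (le_trans (le_max_left _ _) hi)]
      have h1 : c₁ * (j:ℝ) ^ (-r) ≤ c₁ * (i:ℝ) ^ (-r) := by
        exact mul_le_mul_of_nonneg_left hpowle hc₁.le
      calc c₁ * (j:ℝ) ^ (-r) * Real.exp (-lam * (j:ℝ))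
          ≤ c₁ * (i:ℝ) ^ (-r) * (Real.exp (-lam * (i:ℝ)) * Real.exp (-lam)) := by
            apply mul_le_mul h1 hexple (Real.exp_pos _).le
            positivity
        _ = c₁ * (i:ℝ) ^ (-r) * Real.exp (-lam * (i:ℝ)) * Real.exp (-lam) := by ring
    have hqk1 : q k * Real.exp (-lam) = q (k+1) := by
      rw [hqform k hk, hqform (k+1) (by omega), mul_assoc, ← Real.exp_add]
      push_cast
      ring_nf
    have : p j ≤ q (k+1) := by
      rw [← hqk1]
      calc p j ≤ p i * Real.exp (-lam) := hpj
        _ ≤ q k * Real.exp (-lam) :=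
          mul_le_mul_of_nonneg_right hiq (Real.exp_pos _).le
    linarith
  -- finiteness of the "big p" set
  have hF : {i : ℕ | q k₀ < p i}.Finite := by
    have hev : ∀ᶠ i in atTop, p i < q k₀ := hp0.eventually_lt_const (hq k₀)
    rw [← Nat.cofinite_eq_atTop, eventually_cofinite] at hev
    exact hev.subset (by intro i hi; simp only [Set.mem_setOf_eq] at *; linarith)
  set m := hF.toFinset.card with hm
  -- bound for k ≥ k₀
  have hbig : ∀ k, k₀ ≤ k →
      {i : ℕ | q (k + 1) < p i ∧ p i ≤ q k}.encard ≤ (N : ℕ∞) + 1 := by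
    intro k hk
    have hsub : {i : ℕ | q (k + 1) < p i ∧ p i ≤ q k} ⊆
        (↑(Finset.range N) : Set ℕ) ∪ {i : ℕ | N ≤ i ∧ q (k + 1) < p i ∧ p i ≤ q k} := by
      intro i hi
      rcases lt_or_ge i N with h | h
      · exact Or.inl (by simpa using h)
      · exact Or.inr ⟨h, hi⟩
    calc {i : ℕ | q (k + 1) < p i ∧ p i ≤ q k}.encard
        ≤ _ := Set.encard_le_encard hsub
      _ ≤ (↑(Finset.range N) : Set ℕ).encard
            + {i : ℕ | N ≤ i ∧ q (k + 1) < p i ∧ p i ≤ q k}.encard := Set.encard_union_le _ _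
      _ ≤ (N : ℕ∞) + 1 := by
          apply add_le_add
          · rw [Set.encard_coe_eq_coe_finsetCard]; simp
          · rw [Set.encard_le_one_iff]
            rintro a b ⟨ha, ha1, ha2⟩ ⟨hb, hb1, hb2⟩
            exact key k hk a b ha hb ha1 ha2 hb1 hb2
  constructor
  · refine ⟨N + 1 + m, by omega, fun k => ?_⟩
    rcases le_or_gt k₀ k with hk | hk
    · calc {i : ℕ | q (k + 1) < p i ∧ p i ≤ q k}.encard
          ≤ (N : ℕ∞) + 1 := hbig k hk
        _ ≤ ((N + 1 + m : ℕ) : ℕ∞) := by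
            push_cast
            exact le_add_of_nonneg_right (by positivity)
    · have hsub : {i : ℕ | q (k + 1) < p i ∧ p i ≤ q k} ⊆ {i : ℕ | q k₀ < p i} := by
        intro i hi
        have : q k₀ ≤ q (k + 1) := hqmono (by omega)
        exact lt_of_le_of_lt this hi.1
      calc {i : ℕ | q (k + 1) < p i ∧ p i ≤ q k}.encard
          ≤ {i : ℕ | q k₀ < p i}.encard := Set.encard_le_encard hsub
        _ = (m : ℕ∞) := by rw [hm, ← Set.encard_coe_eq_coe_finsetCard, hF.coe_toFinset]
        _ ≤ ((N + 1 + m : ℕ) : ℕ∞) := by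
            push_cast
            exact le_add_of_nonneg_left (by positivity)
  · -- eventually at most one
    have hNne : (Finset.range N).Nonempty := by
      rw [Finset.nonempty_range_iff]; omega
    set ε := (Finset.range N).inf' hNne p with hε
    have hεpos : 0 < ε := by
      rw [hε, Finset.lt_inf'_iff]
      exact fun i _ => hp i
    have hev : ∀ᶠ k in atTop, q k < ε := hq0.eventually_lt_const hεpos
    filter_upwards [hev, eventually_ge_atTop k₀] with k hkε hkk₀
    rw [Set.encard_le_one_iff]
    rintro a b ⟨ha1, ha2⟩ ⟨hb1, hb2⟩
    have haN : N ≤ a := by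
      by_contra h
      have : ε ≤ p a := Finset.inf'_le p (Finset.mem_range.mpr (by omega))
      linarith
    have hbN : N ≤ b := by
      by_contra h
      have : ε ≤ p b := Finset.inf'_le p (Finset.mem_range.mpr (by omega))
      linarith
    exact key k hkk₀ a b haN hbN ha1 ha2 hb1 hb2
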